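/- Let n ≥ 2 and δ = (√(n² + 8n − 8) + 2 − n)/(2(n−1)). Let A = (A_{ijp}) be a real array indexed by triples with i ≠ j, symmetric in i and j (A_{ijp} = A_{jip}), and let B = (B_q) ∈ ℝ^n with B_q > 0 for all q, and suppose B_q ≤ A_{ijp} ≤ (1+δ)B_q for all q, all p, and all i ≠ j. Then for every totally symmetric real 3-tensor h = (h_{ijp}) on {1,…,n}, Σ_{i≠j} Σ_{p=1}^n A_{ijp}(h_{ijp}² − h_{iip}h_{jjp}) + Σ_{p=1}^n B_p(Σ_{i=1}^n h_{iip})² ≥ 0. -/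

import Mathlib

open Finset

private lemma pairsum' {n : ℕ} (g : Fin n → ℝ) :
    ∑ i, ∑ j ∈ Finset.univ.erase i, g i * g j = (∑ i, g i)^2 - ∑ i, g i^2 := by
  have e : ∀ i : Fin n, ∑ j ∈ Finset.univ.erase i, g i * g j = g i * (∑ j, g j) - g i * g i := by
    intro i
    rw [Finset.sum_erase_eq_sub (Finset.mem_univ i), Finset.mul_sum]
  simp_rw [e]
  rw [Finset.sum_sub_distrib, ← Finset.sum_mul, sq]
  congr 1
  exact Finset.sum_congr rfl fun i _ => (sq (g i)).symm

private lemma core_ineq (nr δ b Qe Se u S1 : ℝ) (hn : 2 ≤ nr) (hδ0 : 0 ≤ δ)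
    (hδq : (nr - 1) * δ^2 + (nr - 2) * δ = 3) (hb : 0 < b)
    (hS : 0 ≤ Se) (hu : 0 ≤ u) (hCS : Se^2 ≤ (nr - 1) * Qe) :
    0 ≤ 2 * (b * Qe) - (b * (S1^2 - (Qe + u^2)) + δ * b * ((Se + u)^2 - (Qe + u^2)))
      + b * S1^2 := by
  have hkey : (nr - 1) * ((3+δ)*Qe + (1+δ)*u^2 - δ*(Se+u)^2)
      = (3+δ) * ((nr - 1)*Qe - Se^2) + (nr - 1)*(δ*Se - u)^2
        - Se^2 * ((nr - 1)*δ^2 + (nr - 2)*δ - 3) := by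
    ring
  have hcore : 0 ≤ (3+δ)*Qe + (1+δ)*u^2 - δ*(Se+u)^2 := by
    have t1 : 0 ≤ (3+δ) * ((nr - 1)*Qe - Se^2) := mul_nonneg (by linarith) (by linarith)
    have t2 : 0 ≤ (nr - 1)*(δ*Se - u)^2 := mul_nonneg (by linarith) (sq_nonneg _)
    nlinarith [hkey, hδq]
  nlinarith [mul_nonneg hb.le hcore]

theorem stmt_16 (n : ℕ) (hn : 2 ≤ n)
    (δ : ℝ) (hδ : δ = (Real.sqrt ((n : ℝ) ^ 2 + 8 * n - 8) + 2 - n) / (2 * ((n : ℝ) - 1)))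
    (A : Fin n → Fin n → Fin n → ℝ) (hA : ∀ i j p, i ≠ j → A i j p = A j i p)
    (B : Fin n → ℝ) (hB : ∀ q, 0 < B q)
    (hpinch : ∀ q p i j, i ≠ j → B q ≤ A i j p ∧ A i j p ≤ (1 + δ) * B q)
    (h : Fin n → Fin n → Fin n → ℝ)
    (hsym1 : ∀ i j p, h i j p = h j i p)
    (hsym2 : ∀ i j p, h i j p = h i p j) :
    0 ≤ ∑ i, ∑ j ∈ Finset.univ.erase i, ∑ p,
          A i j p * (h i j p ^ 2 - h i i p * h j j p)
        + ∑ p, B p * (∑ i, h i i p) ^ 2 := by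
  -- numeric facts about δ
  have hn2 : (2:ℝ) ≤ (n:ℝ) := by exact_mod_cast hn
  have hpos : (0:ℝ) ≤ (n:ℝ)^2 + 8*n - 8 := by nlinarith
  have hr2 : (Real.sqrt ((n : ℝ) ^ 2 + 8 * n - 8))^2 = (n:ℝ)^2 + 8*n - 8 := Real.sq_sqrt hpos
  have hr0 : 0 ≤ Real.sqrt ((n : ℝ) ^ 2 + 8 * n - 8) := Real.sqrt_nonneg _
  have hδ0 : 0 ≤ δ := by
    rw [hδ]
    apply div_nonneg _ (by linarith)
    nlinarith [hr2, hr0]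
  have hδq : ((n:ℝ) - 1) * δ^2 + ((n:ℝ) - 2) * δ = 3 := by
    rw [hδ]
    have hne : (n:ℝ) - 1 ≠ 0 := by intro hc; rw [sub_eq_zero] at hc; nlinarith
    field_simp
    nlinarith [hr2, sq_nonneg (Real.sqrt ((n : ℝ) ^ 2 + 8 * n - 8) + 2 - (n:ℝ)),
      Real.sq_sqrt (show (0:ℝ) ≤ (n:ℝ) * ((n:ℝ) + 8) - 8 by nlinarith)]
  -- the weight function
  set w : Fin n → Fin n → Fin n → ℝ :=
    fun i j p => if p = i then B j else if p = j then B i else 0 with hw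
  -- pointwise lower bound
  have hpt : ∀ i j p : Fin n, i ≠ j →
      w i j p * h i j p ^ 2 - (B p * (h i i p * h j j p) + δ * (B p * (|h i i p| * |h j j p|)))
        ≤ A i j p * (h i j p ^ 2 - h i i p * h j j p) := by
    intro i j p hij
    have h1 := (hpinch p p i j hij).1
    have h2 := (hpinch p p i j hij).2
    have hb := hB p
    have hA0 : 0 ≤ A i j p := le_trans hb.le h1
    have hwA : w i j p ≤ A i j p := by
      simp only [hw]
      split_ifs
      · exact (hpinch j p i j hij).1
      · exact (hpinch i p i j hij).1
      · exact hA0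
    have hsq : w i j p * h i j p ^ 2 ≤ A i j p * h i j p ^ 2 :=
      mul_le_mul_of_nonneg_right hwA (sq_nonneg _)
    rcases le_or_gt 0 (h i i p * h j j p) with hX | hX
    · have habs : |h i i p| * |h j j p| = h i i p * h j j p := by
        rw [← abs_mul, abs_of_nonneg hX]
      rw [habs]
      nlinarith [mul_le_mul_of_nonneg_right h2 hX]
    · have habs : |h i i p| * |h j j p| = -(h i i p * h j j p) := by
        rw [← abs_mul, abs_of_neg hX]
      rw [habs]
      nlinarith [mul_le_mul_of_nonpos_right h1 hX.le,
        mul_nonneg (mul_nonneg hδ0 hb.le) (neg_nonneg.mpr hX.le)]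
  -- termwise bound on the triple sum
  have hT : ∑ i, ∑ j ∈ Finset.univ.erase i, ∑ p,
        (w i j p * h i j p ^ 2
          - (B p * (h i i p * h j j p) + δ * (B p * (|h i i p| * |h j j p|))))
      ≤ ∑ i, ∑ j ∈ Finset.univ.erase i, ∑ p,
          A i j p * (h i j p ^ 2 - h i i p * h j j p) := by
    refine Finset.sum_le_sum fun i _ => Finset.sum_le_sum fun j hj => Finset.sum_le_sum fun p _ => ?_
    exact hpt i j p (Finset.ne_of_mem_erase hj).symm
  -- swap helper
  have hswap : ∀ f : Fin n → Fin n → ℝ,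
      ∑ i, ∑ j ∈ Finset.univ.erase i, f i j = ∑ j, ∑ i ∈ Finset.univ.erase j, f i j := by
    intro f
    have e1 : ∑ i, ∑ j ∈ Finset.univ.erase i, f i j = ∑ i, ((∑ j, f i j) - f i i) :=
      Finset.sum_congr rfl fun i _ => Finset.sum_erase_eq_sub (mem_univ i)
    have e2 : ∑ j, ∑ i ∈ Finset.univ.erase j, f i j = ∑ j, ((∑ i, f i j) - f j j) :=
      Finset.sum_congr rfl fun j _ => Finset.sum_erase_eq_sub (mem_univ j)
    rw [e1, e2, Finset.sum_sub_distrib, Finset.sum_sub_distrib, Finset.sum_comm]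
  -- computation of the square-term sum
  have hSsq : (∑ i, ∑ j ∈ Finset.univ.erase i, ∑ p, w i j p * h i j p ^ 2)
      = ∑ p, 2 * (B p * ∑ i ∈ Finset.univ.erase p, h i i p ^ 2) := by
    have inner : ∀ i j : Fin n, j ∈ Finset.univ.erase i →
        ∑ p, w i j p * h i j p ^ 2 = B j * h i i j ^ 2 + B i * h j j i ^ 2 := by
      intro i j hj
      have hij : i ≠ j := (Finset.ne_of_mem_erase hj).symm
      have e : ∀ p : Fin n, w i j p * h i j p ^ 2
          = (if p = i then B j * h i j i ^ 2 else 0) + (if p = j then B i * h i j j ^ 2 else 0) := by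
        intro p
        simp only [hw]
        by_cases e1 : p = i
        · subst e1; rw [if_pos rfl, if_pos rfl, if_neg hij, add_zero]
        · by_cases e2 : p = j
          · subst e2; rw [if_neg e1, if_pos rfl, if_pos rfl, if_neg e1, zero_add]
          · rw [if_neg e1, if_neg e2, if_neg e1, if_neg e2, zero_mul, add_zero]
      have eh1 : h i j i = h i i j := hsym2 i j i
      have eh2 : h i j j = h j j i := by rw [hsym1 i j j, hsym2 j i j]
      simp_rw [e]
      rw [Finset.sum_add_distrib]
      simp [Finset.sum_ite_eq', eh1, eh2]
    rw [Finset.sum_congr rfl fun i _ => Finset.sum_congr rfl fun j hj => inner i j hj]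
    have hsplit : ∑ i, ∑ j ∈ Finset.univ.erase i, (B j * h i i j ^ 2 + B i * h j j i ^ 2)
        = (∑ i, ∑ j ∈ Finset.univ.erase i, B j * h i i j ^ 2)
          + ∑ i, ∑ j ∈ Finset.univ.erase i, B i * h j j i ^ 2 := by
      simp only [Finset.sum_add_distrib]
    rw [hsplit, hswap (fun i j => B j * h i i j ^ 2)]
    simp only [← Finset.mul_sum]
    rw [two_mul]
  -- reorder the negative sum by p
  have hcomm : ∀ G : Fin n → Fin n → Fin n → ℝ,
      (∑ i, ∑ j ∈ Finset.univ.erase i, ∑ p, G i j p)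
        = ∑ p, ∑ i, ∑ j ∈ Finset.univ.erase i, G i j p := by
    intro G
    have h1 : ∀ i : Fin n, ∑ j ∈ Finset.univ.erase i, ∑ p, G i j p
        = ∑ p, ∑ j ∈ Finset.univ.erase i, G i j p := fun i => Finset.sum_comm
    simp_rw [h1]
    exact Finset.sum_comm
  -- per-slot inequality
  have hper : ∀ p : Fin n, 0 ≤ 2 * (B p * ∑ i ∈ Finset.univ.erase p, h i i p ^ 2)
      - (∑ i, ∑ j ∈ Finset.univ.erase i,
          (B p * (h i i p * h j j p) + δ * (B p * (|h i i p| * |h j j p|))))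
      + B p * (∑ i, h i i p) ^ 2 := by
    intro p
    have e1 : ∑ i, ∑ j ∈ Finset.univ.erase i, h i i p * h j j p
        = (∑ i, h i i p)^2 - ∑ i, h i i p ^ 2 := pairsum' (fun i => h i i p)
    have e2 : ∑ i, ∑ j ∈ Finset.univ.erase i, |h i i p| * |h j j p|
        = (∑ i, |h i i p|)^2 - ∑ i, h i i p ^ 2 := by
      have := pairsum' (fun i => |h i i p|)
      simp only [sq_abs] at this
      exact this
    have hsplit : ∑ i, ∑ j ∈ Finset.univ.erase i,
        (B p * (h i i p * h j j p) + δ * (B p * (|h i i p| * |h j j p|)))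
        = B p * (∑ i, ∑ j ∈ Finset.univ.erase i, h i i p * h j j p)
          + δ * B p * (∑ i, ∑ j ∈ Finset.univ.erase i, |h i i p| * |h j j p|) := by
      simp only [Finset.sum_add_distrib, Finset.mul_sum, mul_assoc]
    have hQs : (∑ i, h i i p ^ 2)
        = (∑ i ∈ Finset.univ.erase p, h i i p ^ 2) + |h p p p|^2 := by
      rw [Finset.sum_erase_eq_sub (f := fun i => h i i p ^ 2) (Finset.mem_univ p), sq_abs]
      ring
    have hAs : (∑ i, |h i i p|) = (∑ i ∈ Finset.univ.erase p, |h i i p|) + |h p p p| := by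
      rw [Finset.sum_erase_eq_sub (f := fun i => |h i i p|) (Finset.mem_univ p)]
      ring
    have hcard : ((Finset.univ.erase p).card : ℝ) = (n:ℝ) - 1 := by
      rw [Finset.card_erase_of_mem (mem_univ p), Finset.card_univ, Fintype.card_fin]
      rw [Nat.cast_sub (by omega)]
      simp
    have hCS : (∑ i ∈ Finset.univ.erase p, |h i i p|)^2
        ≤ ((n:ℝ) - 1) * ∑ i ∈ Finset.univ.erase p, h i i p ^ 2 := by
      have hcs := sq_sum_le_card_mul_sum_sq (s := Finset.univ.erase p) (f := fun i => |h i i p|)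
      have habs : ∑ i ∈ Finset.univ.erase p, |h i i p| ^ 2
          = ∑ i ∈ Finset.univ.erase p, h i i p ^ 2 :=
        Finset.sum_congr rfl fun i _ => sq_abs _
      rw [habs, hcard] at hcs
      exact hcs
    rw [hsplit, e1, e2, hQs, hAs]
    exact core_ineq ((n:ℝ)) δ (B p) _ _ _ _ hn2 hδ0 hδq (hB p)
      (Finset.sum_nonneg fun i _ => abs_nonneg _) (abs_nonneg _) hCS
  -- assemble
  have hfinal : 0 ≤ (∑ i, ∑ j ∈ Finset.univ.erase i, ∑ p,
        (w i j p * h i j p ^ 2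
          - (B p * (h i i p * h j j p) + δ * (B p * (|h i i p| * |h j j p|)))))
      + ∑ p, B p * (∑ i, h i i p) ^ 2 := by
    have e1 : (∑ i, ∑ j ∈ Finset.univ.erase i, ∑ p,
        (w i j p * h i j p ^ 2
          - (B p * (h i i p * h j j p) + δ * (B p * (|h i i p| * |h j j p|)))))
        = (∑ i, ∑ j ∈ Finset.univ.erase i, ∑ p, w i j p * h i j p ^ 2)
          - ∑ i, ∑ j ∈ Finset.univ.erase i, ∑ p,
              (B p * (h i i p * h j j p) + δ * (B p * (|h i i p| * |h j j p|))) := by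
      simp only [Finset.sum_sub_distrib]
    rw [e1, hSsq,
      hcomm (fun i j p => B p * (h i i p * h j j p) + δ * (B p * (|h i i p| * |h j j p|)))]
    rw [← Finset.sum_sub_distrib, ← Finset.sum_add_distrib]
    exact Finset.sum_nonneg fun p _ => hper p
  linarith [hT, hfinal]
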